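/- arXiv:0808.3194 — 3 statements merged into one kernel-verified Lean document; each statement's English description precedes it below -/
import Mathlib

section
/- There exist a constant C₂ > 0 and N₀ ∈ ℕ such that for all natural numbers N ≥ N₀, ∑_{j=0}^{N} ∑_{k=0}^{N} (2π)^{-1} ∫_ℝ |f̃_{j,k}(t)|² dt ≤ C₂ · N^{17/6}. (By the Plancherel theorem, (2π)^{-1} ∫ |f̃_{j,k}(t)|² dt is the squared L²(ℝ)-norm of the pattern function f_{j,k}.) -/
open MeasureTheory

/-- The generalized Laguerre polynomial `L_k^α(x) = ∑_{i=0}^{k} (-1)^i C(k+α, k-i) x^i / i!`. -/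
noncomputable def laguerre (k α : ℕ) (x : ℝ) : ℝ :=
  ∑ i ∈ Finset.range (k + 1),
    (-1 : ℝ) ^ i * (Nat.choose (k + α) (k - i)) * x ^ i / (Nat.factorial i)

/-- The Fourier transform `f̃_{j,k}` of the pattern function `f_{j,k}`: for `j ≥ k`,
`f̃_{j,k}(t) = π (-i)^{j-k} √(2^{k-j} k!/j!) |t|^{j-k} e^{-t²/4} L_k^{j-k}(t²/2)`,
and `f̃_{j,k} = f̃_{k,j}` for `j < k`. -/
noncomputable def patternFT (j k : ℕ) (t : ℝ) : ℂ :=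
  (Real.pi : ℂ) * (-Complex.I) ^ (max j k - min j k) *
    ((Real.sqrt ((Nat.factorial (min j k) : ℝ) /
        (2 ^ (max j k - min j k) * (Nat.factorial (max j k) : ℝ))) : ℝ) : ℂ) *
    ((|t| ^ (max j k - min j k) * Real.exp (-t ^ 2 / 4) *
        laguerre (min j k) (max j k - min j k) (t ^ 2 / 2) : ℝ) : ℂ)

open Finset Real Set

set_option linter.all false

/-- Alternating Vandermonde-type sum. -/
def Sc (k a b : ℕ) : ℤ :=
  ∑ r ∈ range (k+1), (-1:ℤ)^r * (a.choose (k-r)) * ((b+r).choose r)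

noncomputable def lagF (k d : ℕ) (x : ℝ) : ℝ := x^d * Real.exp (-x) * (laguerre k d x)^2


/-- Alternating Vandermonde-type sum. -/
lemma Sc_zero_k (a b : ℕ) : Sc 0 a b = 1 := by
  simp [Sc]

lemma choose_step (b r : ℕ) :
    ((b+1+r).choose r : ℤ) - ((b+r).choose r : ℤ) = ((b+r).choose (b+1) : ℤ) := by
  cases r with
  | zero => simp [Nat.choose_eq_zero_of_lt]
  | succ r' =>
    have h1 : (b+1+(r'+1)).choose (r'+1) = (b+(r'+1)).choose r' + (b+(r'+1)).choose (r'+1) := by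
      have := Nat.choose_succ_succ (b + r' + 1) r'
      rw [show b+1+(r'+1) = (b+r'+1)+1 by omega, show b+(r'+1) = b+r'+1 by omega]; exact this
    have h2 : (b+(r'+1)).choose r' = (b+(r'+1)).choose (b+1) := by
      rw [← Nat.choose_symm (by omega)]
      congr 1
      omega
    rw [h1, h2]
    push_cast
    ring

lemma Sc_rec (k a b : ℕ) : Sc (k+1) a (b+1) = Sc (k+1) a b - Sc k a (b+1) := by
  have key : Sc (k+1) a (b+1) - Sc (k+1) a b
      = ∑ r ∈ range (k+2), (-1:ℤ)^r * (a.choose (k+1-r)) * ((b+r).choose (b+1)) := by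
    rw [Sc, Sc, ← Finset.sum_sub_distrib]
    refine Finset.sum_congr rfl fun r _ => ?_
    rw [← choose_step b r]
    ring
  have key2 : ∑ r ∈ range (k+2), (-1:ℤ)^r * (a.choose (k+1-r)) * ((b+r).choose (b+1))
      = - Sc k a (b+1) := by
    rw [Finset.sum_range_succ' (fun r => (-1:ℤ)^r * (a.choose (k+1-r)) * ((b+r).choose (b+1)))]
    have h0 : (-1:ℤ)^0 * (a.choose (k+1-0)) * ((b+0).choose (b+1)) = 0 := by
      simp [Nat.choose_eq_zero_of_lt]
    rw [h0, add_zero, Sc, ← Finset.sum_neg_distrib]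
    refine Finset.sum_congr rfl fun r _ => ?_
    have : (b + (r+1)).choose (b+1) = (b+1+r).choose r := by
      rw [← Nat.choose_symm (by omega)]
      congr 1 <;> omega
    rw [this]
    have hk : k + 1 - (r+1) = k - r := by omega
    rw [hk]
    ring
  linarith [key, key2]

lemma Sc_base (a k : ℕ) (ha : 1 ≤ a) : Sc k a 0 = ((a-1).choose k : ℤ) := by
  induction k with
  | zero => simp [Sc]
  | succ k ih =>
    have : Sc (k+1) a 0 = (a.choose (k+1) : ℤ) - Sc k a 0 := by
      rw [Sc, Finset.sum_range_succ' (fun r => (-1:ℤ)^r * (a.choose (k+1-r)) * ((0+r).choose r))]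
      simp only [Nat.choose_self, Nat.cast_one, mul_one, zero_add, Nat.sub_zero, pow_zero, one_mul]
      rw [Sc, add_comm, sub_eq_add_neg, ← Finset.sum_neg_distrib]
      congr 1
      refine Finset.sum_congr rfl fun r _ => ?_
      have hk : k + 1 - (r+1) = k - r := by omega
      rw [hk]
      simp
      ring
    rw [this, ih]
    have hp : (a-1+1).choose (k+1) = (a-1).choose k + (a-1).choose (k+1) := Nat.choose_succ_succ _ _
    have ha' : a - 1 + 1 = a := by omega
    rw [ha'] at hp
    rw [hp]
    push_cast
    ring


lemma Sc_eq : ∀ b k a, b < a → Sc k a b = ((a - b - 1).choose k : ℤ) := by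
  intro b
  induction b with
  | zero => intro k a ha; rw [Sc_base a k (by omega)]; norm_num
  | succ b ihb =>
    intro k
    induction k with
    | zero => intro a ha; rw [Sc_zero_k]; rw [Nat.choose_zero_right]; norm_num
    | succ k ihk =>
      intro a ha
      rw [Sc_rec, ihb (k+1) a (by omega), ihk a ha]
      have h2 : a - b - 1 = (a - (b+1) - 1) + 1 := by omega
      have hp : ((a - (b+1) - 1) + 1).choose (k+1)
          = (a - (b+1) - 1).choose k + (a - (b+1) - 1).choose (k+1) := Nat.choose_succ_succ _ _
      rw [h2, hp]
      push_cast
      ring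

lemma Sc_diag : ∀ k a, Sc k a a = (-1:ℤ)^k := by
  intro k
  induction k with
  | zero => intro a; rw [Sc_zero_k]; simp
  | succ k ih =>
    intro a
    cases a with
    | zero =>
      rw [Sc, Finset.sum_eq_single (k+1)]
      · simp
      · intro r hr hne
        have : k + 1 - r ≠ 0 := by
          simp at hr; omega
        rw [Nat.choose_eq_zero_of_lt (by omega)]
        simp
      · intro h; simp at h
    | succ b =>
      rw [Sc_rec k (b+1) b, ih (b+1), Sc_eq b (k+1) (b+1) (by omega)]
      have : b + 1 - b - 1 = 0 := by omega
      rw [this, Nat.choose_eq_zero_of_lt (by omega)]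
      push_cast
      ring


lemma integrableOn_pow_exp (m : ℕ) :
    IntegrableOn (fun x : ℝ => x ^ m * Real.exp (-x)) (Set.Ioi 0) := by
  have h := Real.GammaIntegral_convergent (s := (m:ℝ)+1) (by positivity)
  apply h.congr_fun ?_ measurableSet_Ioi
  intro x hx
  have hx' : (0:ℝ) < x := Set.mem_Ioi.mp hx
  simp only
  rw [show ((m:ℝ)+1-1) = (m:ℝ) by ring, Real.rpow_natCast]
  ring

lemma integral_pow_exp (m : ℕ) :
    ∫ x in Set.Ioi (0:ℝ), x ^ m * Real.exp (-x) = m.factorial := by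
  have h := Real.Gamma_eq_integral (s := (m:ℝ)+1) (by positivity)
  have h2 : Real.Gamma ((m:ℝ)+1) = m.factorial := Real.Gamma_nat_eq_factorial m
  rw [h2] at h
  rw [h]
  refine setIntegral_congr_fun measurableSet_Ioi fun x hx => ?_
  have hx' : (0:ℝ) < x := Set.mem_Ioi.mp hx
  rw [show ((m:ℝ)+1-1) = (m:ℝ) by ring, Real.rpow_natCast]
  ring

lemma integrableOn_rpow_pow_exp (m : ℕ) :
    IntegrableOn (fun x : ℝ => x ^ (-(1/2):ℝ) * (x ^ m * Real.exp (-x))) (Set.Ioi 0) := by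
  have h := Real.GammaIntegral_convergent (s := (m:ℝ)+1/2) (by positivity)
  apply h.congr_fun ?_ measurableSet_Ioi
  intro x hx
  have hx' : (0:ℝ) < x := Set.mem_Ioi.mp hx
  simp only
  rw [show ((m:ℝ)+1/2-1) = (m:ℝ) + (-(1/2)) by ring, Real.rpow_add hx', Real.rpow_natCast]
  ring

lemma laguerre_expand (p k α : ℕ) (x : ℝ) :
    x ^ p * Real.exp (-x) * (laguerre k α x)^2
    = ∑ r ∈ range (k+1), ∑ s ∈ range (k+1),
        (((-1:ℝ)^r * ((k+α).choose (k-r)) / r.factorial) *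
         ((-1:ℝ)^s * ((k+α).choose (k-s)) / s.factorial)) * (x^(p+r+s) * Real.exp (-x)) := by
  simp only [laguerre, sq, Finset.sum_mul_sum, Finset.mul_sum, Finset.sum_mul]
  refine Finset.sum_congr rfl fun r _ => ?_
  refine Finset.sum_congr rfl fun s _ => ?_
  rw [pow_add, pow_add]
  ring

lemma integrableOn_weighted_laguerre_sq (p k α : ℕ) :
    IntegrableOn (fun x : ℝ => x ^ p * Real.exp (-x) * (laguerre k α x)^2) (Set.Ioi 0) := by
  have : (fun x : ℝ => x ^ p * Real.exp (-x) * (laguerre k α x)^2)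
      = fun x => ∑ r ∈ range (k+1), ∑ s ∈ range (k+1),
        (((-1:ℝ)^r * ((k+α).choose (k-r)) / r.factorial) *
         ((-1:ℝ)^s * ((k+α).choose (k-s)) / s.factorial)) * (x^(p+r+s) * Real.exp (-x)) := by
    funext x; exact laguerre_expand p k α x
  rw [this]
  apply integrable_finset_sum
  intro r _
  apply integrable_finset_sum
  intro s _
  exact ((integrableOn_pow_exp (p+r+s)).const_mul _)

lemma laguerre_sq_integral (k α : ℕ) :
    ∫ x in Set.Ioi (0:ℝ), x ^ α * Real.exp (-x) * (laguerre k α x)^2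
    = (k+α).factorial / k.factorial := by
  have expand : ∀ x ∈ Set.Ioi (0:ℝ), x ^ α * Real.exp (-x) * (laguerre k α x)^2
      = ∑ r ∈ range (k+1), ∑ s ∈ range (k+1),
        (((-1:ℝ)^r * ((k+α).choose (k-r)) / r.factorial) *
         ((-1:ℝ)^s * ((k+α).choose (k-s)) / s.factorial)) * (x^(α+r+s) * Real.exp (-x)) :=
    fun x _ => laguerre_expand α k α x
  rw [setIntegral_congr_fun measurableSet_Ioi expand]
  rw [integral_finset_sum _ (fun r _ => integrable_finset_sum _
    (fun s _ => ((integrableOn_pow_exp (α+r+s)).const_mul _)))]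
  have : ∀ r ∈ range (k+1),
      (∫ x in Set.Ioi (0:ℝ), ∑ s ∈ range (k+1),
        (((-1:ℝ)^r * ((k+α).choose (k-r)) / r.factorial) *
         ((-1:ℝ)^s * ((k+α).choose (k-s)) / s.factorial)) * (x^(α+r+s) * Real.exp (-x)))
      = ∑ s ∈ range (k+1),
        (((-1:ℝ)^r * ((k+α).choose (k-r)) / r.factorial) *
         ((-1:ℝ)^s * ((k+α).choose (k-s)) / s.factorial)) * ((α+r+s).factorial : ℝ) := by
    intro r _
    rw [integral_finset_sum _ (fun s _ => ((integrableOn_pow_exp (α+r+s)).const_mul _))]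
    refine Finset.sum_congr rfl fun s _ => ?_
    rw [integral_const_mul, integral_pow_exp]
  rw [Finset.sum_congr rfl this]
  -- now a purely finite-sum computation
  rw [Finset.sum_comm]
  -- outer over s, inner over r
  have inner_eval : ∀ s ∈ range (k+1),
      (∑ r ∈ range (k+1),
        (((-1:ℝ)^r * ((k+α).choose (k-r)) / r.factorial) *
         ((-1:ℝ)^s * ((k+α).choose (k-s)) / s.factorial)) * ((α+r+s).factorial : ℝ))
      = ((-1:ℝ)^s * ((k+α).choose (k-s)) / s.factorial) * ((α+s).factorial : ℝ)
          * ((Sc k (k+α) (α+s) : ℤ) : ℝ) := by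
    intro s _
    have : ∀ r ∈ range (k+1),
        (((-1:ℝ)^r * ((k+α).choose (k-r)) / r.factorial) *
         ((-1:ℝ)^s * ((k+α).choose (k-s)) / s.factorial)) * ((α+r+s).factorial : ℝ)
        = ((-1:ℝ)^s * ((k+α).choose (k-s)) / s.factorial) * ((α+s).factorial : ℝ)
          * ((-1:ℝ)^r * ((k+α).choose (k-r)) * (((α+s)+r).choose r)) := by
      intro r _
      have hfac : ((α+s)+r).choose r * r.factorial * (α+s).factorial = ((α+s)+r).factorial := by
        have := Nat.choose_mul_factorial_mul_factorial (show r ≤ (α+s)+r by omega)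
        simpa [Nat.add_sub_cancel] using this
      have hfacR : (((α+s)+r).factorial : ℝ)
          = (((α+s)+r).choose r : ℝ) * r.factorial * (α+s).factorial := by
        exact_mod_cast congrArg (Nat.cast (R := ℝ)) hfac.symm
      have hre : α + r + s = (α+s)+r := by omega
      rw [hre, hfacR]
      have hrfac : (r.factorial : ℝ) ≠ 0 := Nat.cast_ne_zero.mpr (Nat.factorial_ne_zero r)
      field_simp
    rw [Finset.sum_congr rfl this, ← Finset.mul_sum]
    congr 1
    rw [Sc]
    push_cast
    exact Finset.sum_congr rfl fun r _ => by ring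
  rw [Finset.sum_congr rfl inner_eval]
  rw [Finset.sum_eq_single k]
  · rw [show α + k = k + α by omega, Sc_diag]
    have hkfac : (k.factorial : ℝ) ≠ 0 := Nat.cast_ne_zero.mpr (Nat.factorial_ne_zero k)
    rw [Nat.sub_self, Nat.choose_zero_right]
    push_cast
    have hmm : ((-1:ℝ)^k) * ((-1:ℝ)^k) = 1 := by rw [← mul_pow]; norm_num
    have : (-1:ℝ)^k * 1 / ↑k.factorial * ↑(k+α).factorial * (-1:ℝ)^k
        = ((-1:ℝ)^k*(-1:ℝ)^k) * (↑(k+α).factorial / ↑k.factorial) := by ring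
    rw [this, hmm, one_mul]
  · intro s hs hne
    have hsk : s < k := by simp at hs; omega
    have h1 : α + s < k + α := by omega
    have this2 : Sc k (k+α) (α+s) = ((k+α) - (α+s) - 1).choose k := Sc_eq (α+s) k (k+α) h1
    have h2 : (k+α) - (α+s) - 1 = k - s - 1 := by omega
    have h3 : k - s - 1 < k := by omega
    rw [this2, h2, Nat.choose_eq_zero_of_lt h3]
    simp
  · intro h; simp at h

lemma laguerre_rec (k α : ℕ) (x : ℝ) :
    laguerre (k+1) (α+1) x = laguerre (k+1) α x + laguerre k (α+1) x := by
  have key : ∀ r ∈ range (k+2),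
      (-1:ℝ)^r * ((((k+1)+(α+1)).choose ((k+1)-r)) : ℝ) * x^r / r.factorial
      = (-1:ℝ)^r * ((((k+1)+α).choose ((k+1)-r)) : ℝ) * x^r / r.factorial
        + (if r ≤ k then (-1:ℝ)^r * (((k+(α+1)).choose (k-r)) : ℝ) * x^r / r.factorial
           else 0) := by
    intro r hr
    rw [Finset.mem_range] at hr
    by_cases hrk : r ≤ k
    · rw [if_pos hrk]
      have hc : ((k+1)+(α+1)).choose ((k+1)-r)
          = ((k+1)+α).choose ((k+1)-r) + (k+(α+1)).choose (k-r) := by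
        have h1 : (k+1)+(α+1) = (k+α+1)+1 := by omega
        have h2 : (k+1)-r = (k-r)+1 := by omega
        rw [h1, h2, Nat.choose_succ_succ]
        have h3 : (k+1)+α = k+α+1 := by omega
        have h4 : k+(α+1) = k+α+1 := by omega
        rw [h3, h4]
        simp only [Nat.succ_eq_add_one]
        omega
      rw [hc]
      push_cast
      ring
    · have hr1 : r = k+1 := by omega
      rw [if_neg hrk, hr1]
      norm_num
  calc laguerre (k+1) (α+1) x
      = ∑ r ∈ range (k+2),
        ((-1:ℝ)^r * ((((k+1)+α).choose ((k+1)-r)) : ℝ) * x^r / r.factorial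
        + (if r ≤ k then (-1:ℝ)^r * (((k+(α+1)).choose (k-r)) : ℝ) * x^r / r.factorial
           else 0)) := Finset.sum_congr rfl key
    _ = laguerre (k+1) α x + laguerre k (α+1) x := by
        rw [Finset.sum_add_distrib]
        congr 1
        rw [Finset.sum_range_succ, if_neg (by omega), add_zero]
        exact Finset.sum_congr rfl fun r hr => if_pos (by rw [Finset.mem_range] at hr; omega)

lemma laguerre_sum (k α : ℕ) (x : ℝ) :
    laguerre k (α+1) x = ∑ i ∈ range (k+1), laguerre i α x := by
  induction k with
  | zero => simp [laguerre]
  | succ k ih =>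
    rw [Finset.sum_range_succ, ← ih, laguerre_rec]
    ring

lemma two_mul_rpow_neg_half : (2:ℝ) * (2:ℝ)^(-(1/2):ℝ) = Real.sqrt 2 := by
  calc (2:ℝ) * (2:ℝ)^(-(1/2):ℝ) = (2:ℝ)^(1:ℝ) * (2:ℝ)^(-(1/2):ℝ) := by rw [Real.rpow_one]
    _ = (2:ℝ)^((1:ℝ)+(-(1/2))) := (Real.rpow_add two_pos _ _).symm
    _ = (2:ℝ)^((1/2):ℝ) := by norm_num
    _ = Real.sqrt 2 := (Real.sqrt_eq_rpow 2).symm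

lemma integral_comp_half_sq (F : ℝ → ℝ) :
    ∫ t : ℝ, F (t^2/2) = Real.sqrt 2 * ∫ x in Set.Ioi (0:ℝ), x^(-(1/2):ℝ) * F x := by
  have habs : ∫ t : ℝ, F (t^2/2) = 2 * ∫ t in Set.Ioi (0:ℝ), F (t^2/2) := by
    rw [← integral_comp_abs (f := fun u => F (u^2/2))]
    congr 1
    funext t
    rw [sq_abs]
  set g : ℝ → ℝ := fun y => (1/2) * (y^(-(1/2):ℝ) * F (y/2)) with hg
  have step1 : ∫ t in Set.Ioi (0:ℝ), F (t^2/2) = ∫ y in Set.Ioi (0:ℝ), g y := by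
    rw [← integral_comp_rpow_Ioi g (p := 2) two_ne_zero]
    refine setIntegral_congr_fun measurableSet_Ioi fun x hx => ?_
    have hx' : (0:ℝ) < x := Set.mem_Ioi.mp hx
    have h2 : x ^ ((2:ℝ)) = x ^ (2:ℕ) := by
      rw [← Real.rpow_natCast x 2]; norm_num
    have h3 : (x ^ ((2:ℝ)))^(-(1/2):ℝ) = x⁻¹ := by
      rw [← Real.rpow_mul hx'.le]
      norm_num [Real.rpow_neg_one]
    have h1 : x ^ ((2:ℝ)-1) = x := by norm_num
    simp only [g, smul_eq_mul]
    rw [h3, h2, h1]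
    field_simp
    rw [abs_two]; ring
  have step2 : ∫ y in Set.Ioi (0:ℝ), g y
      = (1/2) * ∫ y in Set.Ioi (0:ℝ), y^(-(1/2):ℝ) * F (y/2) := by
    simp only [g]
    rw [integral_const_mul]
  have this' := integral_comp_mul_left_Ioi (g := fun y => y^(-(1/2):ℝ) * F (y/2)) 0 two_pos
  simp only [mul_zero, smul_eq_mul] at this'
  have h4 : ∫ y in Set.Ioi (0:ℝ), y^(-(1/2):ℝ) * F (y/2)
      = 2 * ∫ x in Set.Ioi (0:ℝ), (2*x)^(-(1/2):ℝ) * F ((2*x)/2) := by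
    rw [this']
    ring
  have h5 : ∫ x in Set.Ioi (0:ℝ), (2*x)^(-(1/2):ℝ) * F ((2*x)/2)
      = (2:ℝ)^(-(1/2):ℝ) * ∫ x in Set.Ioi (0:ℝ), x^(-(1/2):ℝ) * F x := by
    rw [← integral_const_mul]
    refine setIntegral_congr_fun measurableSet_Ioi fun x hx => ?_
    have hx' : (0:ℝ) < x := Set.mem_Ioi.mp hx
    rw [Real.mul_rpow (by norm_num) hx'.le, show (2:ℝ)*x/2 = x by ring]
    ring
  rw [habs, step1, step2, h4, h5, ← two_mul_rpow_neg_half]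
  ring

lemma norm_patternFT_sq (k d : ℕ) (t : ℝ) :
    ‖patternFT (k+d) k t‖^2
    = (Real.pi^2 * ((k.factorial : ℝ) / (2^d * ((k+d).factorial : ℝ))) * 2^d)
        * lagF k d (t^2/2) := by
  have hmax : max (k+d) k = k+d := max_eq_left (Nat.le_add_right k d)
  have hmin : min (k+d) k = k := min_eq_right (Nat.le_add_right k d)
  have hsub : (k+d) - k = d := by omega
  rw [patternFT, hmax, hmin, hsub]
  rw [norm_mul, norm_mul, norm_mul, norm_pow, norm_neg, Complex.norm_I, one_pow, mul_one]
  simp only [Complex.norm_real, Real.norm_eq_abs]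
  have hc : (0:ℝ) ≤ (k.factorial : ℝ) / (2^d * ((k+d).factorial : ℝ)) := by positivity
  rw [abs_of_pos Real.pi_pos, abs_of_nonneg (Real.sqrt_nonneg _)]
  rw [mul_pow, mul_pow, sq_abs, Real.sq_sqrt hc]
  rw [lagF]
  have h1 : (|t| ^ d * Real.exp (-t ^ 2 / 4) * laguerre k d (t ^ 2 / 2))^2
      = (2:ℝ)^d * ((t^2/2)^d * Real.exp (-(t^2/2)) * (laguerre k d (t^2/2))^2) := by
    have ha : (|t| ^ d)^2 = (t^2)^d := by
      rw [← pow_mul, mul_comm d 2, pow_mul, sq_abs]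
    have hb : (Real.exp (-t^2/4))^2 = Real.exp (-(t^2/2)) := by
      rw [sq, ← Real.exp_add]; congr 1; ring
    have hc2 : (t^2)^d = 2^d * (t^2/2)^d := by
      rw [div_pow]
      field_simp
    calc (|t| ^ d * Real.exp (-t ^ 2 / 4) * laguerre k d (t ^ 2 / 2))^2
        = (|t|^d)^2 * (Real.exp (-t^2/4))^2 * (laguerre k d (t^2/2))^2 := by ring
      _ = (2:ℝ)^d * ((t^2/2)^d * Real.exp (-(t^2/2)) * (laguerre k d (t^2/2))^2) := by
          rw [ha, hb, hc2]; ring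
  rw [h1]
  ring

lemma integral_norm_patternFT (k d : ℕ) :
    ∫ t : ℝ, ‖patternFT (k+d) k t‖^2
    = Real.pi^2 * ((k.factorial : ℝ) / ((k+d).factorial : ℝ)) * Real.sqrt 2
        * ∫ x in Set.Ioi (0:ℝ), x^(-(1/2):ℝ) * lagF k d x := by
  set C : ℝ := Real.pi^2 * ((k.factorial : ℝ) / (2^d * ((k+d).factorial : ℝ))) * 2^d with hC
  have h1 : (fun t : ℝ => ‖patternFT (k+d) k t‖^2) = fun t => (fun y => C * lagF k d y) (t^2/2) := by
    funext t; exact norm_patternFT_sq k d t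
  rw [h1, integral_comp_half_sq (fun y => C * lagF k d y)]
  have h2 : ∫ x in Set.Ioi (0:ℝ), x^(-(1/2):ℝ) * (C * lagF k d x)
      = C * ∫ x in Set.Ioi (0:ℝ), x^(-(1/2):ℝ) * lagF k d x := by
    rw [← integral_const_mul]
    congr 1; funext x; ring
  rw [h2]
  have hC2 : C = Real.pi^2 * ((k.factorial : ℝ) / ((k+d).factorial : ℝ)) := by
    rw [hC]
    have : ((k+d).factorial : ℝ) ≠ 0 := Nat.cast_ne_zero.mpr (Nat.factorial_ne_zero _)
    field_simp
  rw [hC2]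
  ring

lemma integrableOn_rpow_weighted_laguerre_sq (p k α : ℕ) :
    IntegrableOn (fun x : ℝ => x ^ (-(1/2):ℝ) * (x ^ p * Real.exp (-x) * (laguerre k α x)^2))
      (Set.Ioi 0) := by
  have : (fun x : ℝ => x ^ (-(1/2):ℝ) * (x ^ p * Real.exp (-x) * (laguerre k α x)^2))
      = fun x => ∑ r ∈ range (k+1), ∑ s ∈ range (k+1),
        (((-1:ℝ)^r * ((k+α).choose (k-r)) / r.factorial) *
         ((-1:ℝ)^s * ((k+α).choose (k-s)) / s.factorial))
          * (x ^ (-(1/2):ℝ) * (x^(p+r+s) * Real.exp (-x))) := by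
    funext x
    rw [laguerre_expand p k α x, Finset.mul_sum]
    refine Finset.sum_congr rfl fun r _ => ?_
    rw [Finset.mul_sum]
    refine Finset.sum_congr rfl fun s _ => ?_
    ring
  rw [this]
  apply integrable_finset_sum
  intro r _
  apply integrable_finset_sum
  intro s _
  exact (integrableOn_rpow_pow_exp (p+r+s)).const_mul _

lemma factorial_ratio_mono {i k : ℕ} (e : ℕ) (h : i ≤ k) :
    ((i+e).factorial : ℝ) / i.factorial ≤ ((k+e).factorial : ℝ) / k.factorial := by
  have h1 : ∀ m : ℕ, ((m+e).factorial : ℝ) / m.factorial = ((m+e).choose e) * e.factorial := by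
    intro m
    have := Nat.choose_mul_factorial_mul_factorial (show e ≤ m+e by omega)
    have h2 : (m+e).choose e * e.factorial * m.factorial = (m+e).factorial := by
      simpa [Nat.add_sub_cancel] using this
    have h3 : ((m+e).choose e : ℝ) * e.factorial * m.factorial = (m+e).factorial := by
      exact_mod_cast congrArg (Nat.cast (R := ℝ)) h2
    have h4 : (m.factorial : ℝ) ≠ 0 := Nat.cast_ne_zero.mpr (Nat.factorial_ne_zero m)
    field_simp [← h3]
    rw [← h3]; ring
  rw [h1 i, h1 k]
  have : (i+e).choose e ≤ (k+e).choose e := Nat.choose_le_choose e (by omega)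
  have he : (0:ℝ) ≤ e.factorial := by positivity
  exact mul_le_mul_of_nonneg_right (by exact_mod_cast this) he

lemma B_bound (k e : ℕ) :
    ∫ x in Set.Ioi (0:ℝ), x^e * Real.exp (-x) * (laguerre k (e+1) x)^2
    ≤ (k+1)^2 * ((k+e).factorial : ℝ) / k.factorial := by
  have hpt : ∀ x ∈ Set.Ioi (0:ℝ),
      x^e * Real.exp (-x) * (laguerre k (e+1) x)^2
      ≤ (k+1) * ∑ i ∈ range (k+1), x^e * Real.exp (-x) * (laguerre i e x)^2 := by
    intro x hx
    have hx' : (0:ℝ) < x := hx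
    have hcs : (laguerre k (e+1) x)^2 ≤ (k+1) * ∑ i ∈ range (k+1), (laguerre i e x)^2 := by
      rw [laguerre_sum k e x]
      have := _root_.sq_sum_le_card_mul_sum_sq (s := range (k+1)) (f := fun i => laguerre i e x)
      simpa [Finset.card_range] using this
    have hw : (0:ℝ) ≤ x^e * Real.exp (-x) := by positivity
    calc x^e * Real.exp (-x) * (laguerre k (e+1) x)^2
        ≤ x^e * Real.exp (-x) * ((k+1) * ∑ i ∈ range (k+1), (laguerre i e x)^2) :=
          mul_le_mul_of_nonneg_left hcs hw
      _ = (k+1) * ∑ i ∈ range (k+1), x^e * Real.exp (-x) * (laguerre i e x)^2 := by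
          have hr : x^e * Real.exp (-x) * (((k:ℝ)+1) * ∑ i ∈ range (k+1), (laguerre i e x)^2)
              = ((k:ℝ)+1) * (x^e * Real.exp (-x) * ∑ i ∈ range (k+1), (laguerre i e x)^2) := by
            ring
          rw [hr, Finset.mul_sum]
  have hint : IntegrableOn
      (fun x : ℝ => (k+1:ℝ) * ∑ i ∈ range (k+1), x^e * Real.exp (-x) * (laguerre i e x)^2)
      (Set.Ioi 0) := by
    apply Integrable.const_mul
    apply integrable_finset_sum
    intro i _
    exact integrableOn_weighted_laguerre_sq e i e
  have step1 := setIntegral_mono_on (integrableOn_weighted_laguerre_sq e k (e+1)) hint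
    measurableSet_Ioi hpt
  refine le_trans step1 ?_
  rw [integral_const_mul, integral_finset_sum _
    (fun i _ => integrableOn_weighted_laguerre_sq e i e)]
  have heval : ∀ i ∈ range (k+1),
      (∫ x in Set.Ioi (0:ℝ), x^e * Real.exp (-x) * (laguerre i e x)^2)
      = ((i+e).factorial : ℝ) / i.factorial := fun i _ => laguerre_sq_integral i e
  rw [Finset.sum_congr rfl heval]
  have hsum : ∑ i ∈ range (k+1), ((i+e).factorial : ℝ) / i.factorial
      ≤ (k+1) * (((k+e).factorial : ℝ) / k.factorial) := by
    calc ∑ i ∈ range (k+1), ((i+e).factorial : ℝ) / i.factorial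
        ≤ ∑ _i ∈ range (k+1), ((k+e).factorial : ℝ) / k.factorial :=
          Finset.sum_le_sum fun i hi =>
            factorial_ratio_mono e (by rw [Finset.mem_range] at hi; omega)
      _ = (k+1) * (((k+e).factorial : ℝ) / k.factorial) := by
          rw [Finset.sum_const, Finset.card_range]
          push_cast
          ring
  calc ((k:ℝ)+1) * ∑ i ∈ range (k+1), ((i+e).factorial : ℝ) / i.factorial
      ≤ ((k:ℝ)+1) * ((k+1) * (((k+e).factorial : ℝ) / k.factorial)) :=
        mul_le_mul_of_nonneg_left hsum (by positivity)
    _ = (k+1)^2 * ((k+e).factorial : ℝ) / k.factorial := by ring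

lemma sqrt_mul_le_amgm {u v lam : ℝ} (hu : 0 ≤ u) (hv : 0 ≤ v) (hlam : 0 < lam) :
    Real.sqrt (u*v) ≤ (lam*u + lam⁻¹*v)/2 := by
  have h : u*v = (lam*u)*(lam⁻¹*v) := by
    field_simp
  rw [h]
  calc Real.sqrt ((lam*u)*(lam⁻¹*v)) ≤ Real.sqrt (((lam*u + lam⁻¹*v)/2)^2) := by
        apply Real.sqrt_le_sqrt
        nlinarith [sq_nonneg (lam*u - lam⁻¹*v), mul_nonneg hlam.le hu,
          mul_nonneg (inv_nonneg.mpr hlam.le) hv]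
    _ = (lam*u + lam⁻¹*v)/2 := Real.sqrt_sq (by positivity)

lemma J_bound_pos (k e : ℕ) :
    ∫ x in Set.Ioi (0:ℝ), x^(-(1/2):ℝ) * lagF k (e+1) x
    ≤ Real.sqrt ((k:ℝ)+e+1) * (((k+e+1).factorial : ℝ) / k.factorial) := by
  set p : ℝ := ((k+e).factorial : ℝ) / k.factorial with hpdef
  have hp : 0 < p := by positivity
  set j : ℝ := (k:ℝ)+e+1 with hjdef
  have hj1 : (1:ℝ) ≤ j := by
    rw [hjdef]
    have h1 : (0:ℝ) ≤ (k:ℝ) := Nat.cast_nonneg k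
    have h2 : (0:ℝ) ≤ (e:ℝ) := Nat.cast_nonneg e
    linarith
  have hj : 0 < j := by positivity
  set A : ℝ := j * p with hAdef
  set Bb : ℝ := ((k:ℝ)+1)^2 * p with hBdef
  have hA : 0 < A := by positivity
  have hB : 0 < Bb := by positivity
  set lam : ℝ := Real.sqrt A / Real.sqrt Bb with hlamdef
  have hlam : 0 < lam := by
    apply div_pos (Real.sqrt_pos.mpr hA) (Real.sqrt_pos.mpr hB)
  -- pointwise bound
  have hpt : ∀ x ∈ Set.Ioi (0:ℝ),
      x^(-(1/2):ℝ) * lagF k (e+1) x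
      ≤ (lam * (x^e * Real.exp (-x) * (laguerre k (e+1) x)^2)
          + lam⁻¹ * (x^(e+1) * Real.exp (-x) * (laguerre k (e+1) x)^2))/2 := by
    intro x hx
    have hx' : (0:ℝ) < x := hx
    have key : x^(-(1/2):ℝ) * x^(e+1:ℕ) = Real.sqrt ((x^(e:ℕ)) * (x^(e+1:ℕ))) := by
      have h1 : (x^(e:ℕ)) * (x^(e+1:ℕ)) = x^(2*e+1:ℕ) := by
        rw [← pow_add]; congr 1; omega
      rw [h1, Real.sqrt_eq_rpow, ← Real.rpow_natCast x (2*e+1), ← Real.rpow_mul hx'.le,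
        ← Real.rpow_natCast x (e+1), ← Real.rpow_add hx']
      congr 1
      push_cast
      ring
    have hw : (0:ℝ) ≤ Real.exp (-x) * (laguerre k (e+1) x)^2 := by positivity
    have hsq := sqrt_mul_le_amgm (u := x^(e:ℕ)) (v := x^(e+1:ℕ))
      (by positivity) (by positivity) hlam
    calc x^(-(1/2):ℝ) * lagF k (e+1) x
        = (x^(-(1/2):ℝ) * x^(e+1:ℕ)) * (Real.exp (-x) * (laguerre k (e+1) x)^2) := by
          rw [lagF]; ring
      _ ≤ ((lam * x^(e:ℕ) + lam⁻¹ * x^(e+1:ℕ))/2) * (Real.exp (-x) * (laguerre k (e+1) x)^2) := by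
          apply mul_le_mul_of_nonneg_right _ hw
          rw [key]
          exact hsq
      _ = (lam * (x^e * Real.exp (-x) * (laguerre k (e+1) x)^2)
          + lam⁻¹ * (x^(e+1) * Real.exp (-x) * (laguerre k (e+1) x)^2))/2 := by ring
  have hrhs_int : IntegrableOn (fun x : ℝ =>
      (lam * (x^e * Real.exp (-x) * (laguerre k (e+1) x)^2)
        + lam⁻¹ * (x^(e+1) * Real.exp (-x) * (laguerre k (e+1) x)^2))/2) (Set.Ioi 0) := by
    apply Integrable.div_const
    exact ((integrableOn_weighted_laguerre_sq e k (e+1)).const_mul lam).add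
      ((integrableOn_weighted_laguerre_sq (e+1) k (e+1)).const_mul lam⁻¹)
  have hstep : ∫ x in Set.Ioi (0:ℝ), x^(-(1/2):ℝ) * lagF k (e+1) x
      ≤ ∫ x in Set.Ioi (0:ℝ),
        (lam * (x^e * Real.exp (-x) * (laguerre k (e+1) x)^2)
          + lam⁻¹ * (x^(e+1) * Real.exp (-x) * (laguerre k (e+1) x)^2))/2 := by
    apply setIntegral_mono_on _ hrhs_int measurableSet_Ioi hpt
    exact integrableOn_rpow_weighted_laguerre_sq (e+1) k (e+1)
  refine le_trans hstep ?_
  -- compute RHS integral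
  have hsplit : ∫ x in Set.Ioi (0:ℝ),
      (lam * (x^e * Real.exp (-x) * (laguerre k (e+1) x)^2)
        + lam⁻¹ * (x^(e+1) * Real.exp (-x) * (laguerre k (e+1) x)^2))/2
      = (lam * (∫ x in Set.Ioi (0:ℝ), x^e * Real.exp (-x) * (laguerre k (e+1) x)^2)
        + lam⁻¹ * (∫ x in Set.Ioi (0:ℝ), x^(e+1) * Real.exp (-x) * (laguerre k (e+1) x)^2))/2 := by
    rw [integral_div, integral_add
      ((integrableOn_weighted_laguerre_sq e k (e+1)).const_mul lam)
      ((integrableOn_weighted_laguerre_sq (e+1) k (e+1)).const_mul lam⁻¹),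
      integral_const_mul, integral_const_mul]
  rw [hsplit]
  have hAint : ∫ x in Set.Ioi (0:ℝ), x^(e+1) * Real.exp (-x) * (laguerre k (e+1) x)^2 = A := by
    rw [laguerre_sq_integral k (e+1), hAdef, hjdef, hpdef]
    have : (k+(e+1)).factorial = (k+e+1) * (k+e).factorial := by
      rw [show k+(e+1) = (k+e)+1 by omega, Nat.factorial_succ]
    rw [this]
    push_cast
    ring
  rw [hAint]
  have hBint : ∫ x in Set.Ioi (0:ℝ), x^e * Real.exp (-x) * (laguerre k (e+1) x)^2 ≤ Bb := by
    refine le_trans (B_bound k e) ?_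
    rw [hBdef, hpdef]
    push_cast
    exact le_of_eq (by ring)
  have hke : ((k:ℝ)+1) ≤ j := by
    rw [hjdef]
    have h2 : (0:ℝ) ≤ (e:ℝ) := Nat.cast_nonneg e
    linarith
  have hjp : j * p = ((k+e+1).factorial : ℝ) / k.factorial := by
    rw [show (k+e+1) = (k+e)+1 from rfl, Nat.factorial_succ, hpdef, hjdef]
    push_cast
    ring
  have hmono : (lam * (∫ x in Set.Ioi (0:ℝ), x^e * Real.exp (-x) * (laguerre k (e+1) x)^2)
        + lam⁻¹ * A)/2 ≤ (lam * Bb + lam⁻¹ * A)/2 := by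
    have := mul_le_mul_of_nonneg_left hBint hlam.le
    linarith
  refine le_trans hmono ?_
  have hlamBb : lam * Bb = Real.sqrt A * Real.sqrt Bb := by
    rw [hlamdef, div_mul_eq_mul_div, mul_div_assoc, Real.div_sqrt]
  have hlamA : lam⁻¹ * A = Real.sqrt A * Real.sqrt Bb := by
    rw [hlamdef, inv_div, div_mul_eq_mul_div, mul_div_assoc, Real.div_sqrt]
    ring
  rw [hlamBb, hlamA]
  have hcollapse : (Real.sqrt A * Real.sqrt Bb + Real.sqrt A * Real.sqrt Bb)/2
      = Real.sqrt A * Real.sqrt Bb := by ring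
  rw [hcollapse, ← Real.sqrt_mul hA.le, ← hjp]
  have hABle : A * Bb ≤ (Real.sqrt j * (j * p))^2 := by
    rw [mul_pow, Real.sq_sqrt hj.le, hAdef, hBdef]
    have h1 : ((k:ℝ)+1)^2 ≤ j^2 := by nlinarith
    nlinarith [hp, sq_nonneg p, mul_pos hj hp]
  calc Real.sqrt (A * Bb) ≤ Real.sqrt ((Real.sqrt j * (j * p))^2) := Real.sqrt_le_sqrt hABle
    _ = Real.sqrt j * (j * p) := Real.sqrt_sq (by positivity)

lemma laguerre_abs_le (k : ℕ) {x ε : ℝ} (hx0 : 0 ≤ x) (hxε : x ≤ ε) :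
    |laguerre k 0 x| ≤ (1+ε)^k := by
  have hε0 : 0 ≤ ε := le_trans hx0 hxε
  calc |laguerre k 0 x|
      ≤ ∑ i ∈ range (k+1), |(-1:ℝ)^i * ((k+0).choose (k-i)) * x^i / i.factorial| := by
        rw [laguerre]
        exact Finset.abs_sum_le_sum_abs _ _
    _ ≤ ∑ i ∈ range (k+1), (k.choose i : ℝ) * ε^i := by
        refine Finset.sum_le_sum fun i hi => ?_
        rw [Finset.mem_range] at hi
        rw [abs_div, abs_mul, abs_mul, abs_pow, abs_neg, abs_one, one_pow, one_mul]
        have h1 : |((k+0).choose (k-i) : ℝ)| = (k.choose i : ℝ) := by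
          rw [Nat.add_zero, abs_of_nonneg (by positivity)]
          exact_mod_cast congrArg (Nat.cast (R := ℝ)) (Nat.choose_symm (by omega : i ≤ k))
        have h2 : |x^i| = x^i := abs_of_nonneg (by positivity)
        have h3 : |(i.factorial : ℝ)| = i.factorial := abs_of_nonneg (by positivity)
        rw [h1, h2, h3]
        have h4 : x^i ≤ ε^i := pow_le_pow_left₀ hx0 hxε i
        have h5 : (1:ℝ) ≤ i.factorial := by
          have := Nat.one_le_iff_ne_zero.mpr (Nat.factorial_ne_zero i)
          exact_mod_cast this
        calc (k.choose i : ℝ) * x^i / i.factorial ≤ (k.choose i : ℝ) * x^i / 1 := by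
              apply div_le_div_of_nonneg_left ?_ ?_ h5
              · positivity
              · norm_num
          _ = (k.choose i : ℝ) * x^i := by ring
          _ ≤ (k.choose i : ℝ) * ε^i := by
              apply mul_le_mul_of_nonneg_left h4 (by positivity)
    _ = (1+ε)^k := by
        rw [add_comm (1:ℝ) ε, add_pow]
        refine Finset.sum_congr rfl fun i hi => ?_
        rw [one_pow]
        ring

lemma J0_bound (k : ℕ) :
    ∫ x in Set.Ioi (0:ℝ), x^(-(1/2):ℝ) * lagF k 0 x ≤ 18 + Real.sqrt ((k:ℝ)+1) := by
  set ε : ℝ := 1/((k:ℝ)+1) with hεdef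
  have hε : 0 < ε := by positivity
  have hε1 : ε ≤ 1 := by
    rw [hεdef]
    rw [div_le_one (by positivity)]
    have : (0:ℝ) ≤ k := Nat.cast_nonneg k
    linarith
  have hf_int : IntegrableOn (fun x : ℝ => x^(-(1/2):ℝ) * lagF k 0 x) (Set.Ioi 0) := by
    have := integrableOn_rpow_weighted_laguerre_sq 0 k 0
    exact this
  have hunion : Set.Ioc (0:ℝ) ε ∪ Set.Ioi ε = Set.Ioi 0 := Set.Ioc_union_Ioi_eq_Ioi hε.le
  have hf_int1 : IntegrableOn (fun x : ℝ => x^(-(1/2):ℝ) * lagF k 0 x) (Set.Ioc (0:ℝ) ε) :=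
    hf_int.mono_set Set.Ioc_subset_Ioi_self
  have hf_int2 : IntegrableOn (fun x : ℝ => x^(-(1/2):ℝ) * lagF k 0 x) (Set.Ioi ε) :=
    hf_int.mono_set (Set.Ioi_subset_Ioi hε.le)
  have hsplit : ∫ x in Set.Ioi (0:ℝ), x^(-(1/2):ℝ) * lagF k 0 x
      = (∫ x in Set.Ioc (0:ℝ) ε, x^(-(1/2):ℝ) * lagF k 0 x)
        + ∫ x in Set.Ioi ε, x^(-(1/2):ℝ) * lagF k 0 x := by
    rw [← hunion, setIntegral_union (Set.Ioc_disjoint_Ioi le_rfl) measurableSet_Ioi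
      hf_int1 hf_int2]
  rw [hsplit]
  -- piece 1
  have hrpow_int : IntegrableOn (fun x : ℝ => 9 * x^(-(1/2):ℝ)) (Set.Ioc (0:ℝ) ε) := by
    apply Integrable.const_mul
    have h := intervalIntegral.intervalIntegrable_rpow' (a := 0) (b := ε)
      (r := -(1/2)) (by norm_num)
    rw [intervalIntegrable_iff_integrableOn_Ioc_of_le hε.le] at h
    exact h
  have hpiece1 : ∫ x in Set.Ioc (0:ℝ) ε, x^(-(1/2):ℝ) * lagF k 0 x ≤ 18 := by
    have hpt : ∀ x ∈ Set.Ioc (0:ℝ) ε, x^(-(1/2):ℝ) * lagF k 0 x ≤ 9 * x^(-(1/2):ℝ) := by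
      intro x hx
      obtain ⟨hx0, hxε⟩ := hx
      have habs : |laguerre k 0 x| ≤ (1+ε)^k := laguerre_abs_le k hx0.le hxε
      have hexp : (1+ε)^k ≤ 3 := by
        calc (1+ε)^k ≤ (Real.exp ε)^k := by
              apply pow_le_pow_left₀ (by positivity)
              linarith [Real.add_one_le_exp ε]
          _ = Real.exp (ε*k) := by rw [← Real.exp_nat_mul]; ring_nf
          _ ≤ Real.exp 1 := by
              apply Real.exp_le_exp.mpr
              rw [hεdef]
              rw [div_mul_eq_mul_div, div_le_one (by positivity)]
              have : (0:ℝ) ≤ k := Nat.cast_nonneg k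
              linarith
          _ ≤ 3 := by
              have := Real.exp_one_lt_d9
              linarith
      have hL2 : (laguerre k 0 x)^2 ≤ 9 := by
        rw [← sq_abs]
        nlinarith [abs_nonneg (laguerre k 0 x)]
      have hlagF : lagF k 0 x ≤ 9 := by
        rw [lagF, pow_zero, one_mul]
        have hexp1 : Real.exp (-x) ≤ 1 := Real.exp_le_one_iff.mpr (by linarith)
        nlinarith [sq_nonneg (laguerre k 0 x), Real.exp_pos (-x)]
      have hxr : (0:ℝ) ≤ x^(-(1/2):ℝ) := Real.rpow_nonneg hx0.le _
      calc x^(-(1/2):ℝ) * lagF k 0 x ≤ x^(-(1/2):ℝ) * 9 :=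
            mul_le_mul_of_nonneg_left hlagF hxr
        _ = 9 * x^(-(1/2):ℝ) := by ring
    have hstep := setIntegral_mono_on hf_int1 hrpow_int measurableSet_Ioc hpt
    refine le_trans hstep ?_
    rw [integral_const_mul]
    have hval : ∫ x in Set.Ioc (0:ℝ) ε, x^(-(1/2):ℝ) = 2 * ε^((1/2):ℝ) := by
      rw [← intervalIntegral.integral_of_le hε.le]
      rw [integral_rpow (Or.inl (by norm_num))]
      rw [Real.zero_rpow (by norm_num)]
      norm_num
      ring
    rw [hval]
    have : ε^((1/2):ℝ) ≤ 1 := Real.rpow_le_one hε.le hε1 (by norm_num)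
    linarith
  -- piece 2
  have hpiece2 : ∫ x in Set.Ioi ε, x^(-(1/2):ℝ) * lagF k 0 x ≤ Real.sqrt ((k:ℝ)+1) := by
    have hsqeps : (Real.sqrt ε)⁻¹ = Real.sqrt ((k:ℝ)+1) := by
      rw [hεdef, one_div, Real.sqrt_inv, inv_inv]
    have hpt : ∀ x ∈ Set.Ioi ε, x^(-(1/2):ℝ) * lagF k 0 x
        ≤ Real.sqrt ((k:ℝ)+1) * lagF k 0 x := by
      intro x hx
      have hx' : ε < x := hx
      have hx0 : (0:ℝ) < x := lt_trans hε hx'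
      have h1 : x^(-(1/2):ℝ) = (Real.sqrt x)⁻¹ := by
        rw [Real.rpow_neg hx0.le, Real.sqrt_eq_rpow]
      have h2 : (Real.sqrt x)⁻¹ ≤ (Real.sqrt ε)⁻¹ := by
        apply inv_anti₀ (Real.sqrt_pos.mpr hε)
        exact Real.sqrt_le_sqrt hx'.le
      have hlagF0 : 0 ≤ lagF k 0 x := by
        rw [lagF]; positivity
      rw [h1]
      apply mul_le_mul_of_nonneg_right _ hlagF0
      rw [← hsqeps]
      exact h2
    have hg_int : IntegrableOn (fun x : ℝ => Real.sqrt ((k:ℝ)+1) * lagF k 0 x) (Set.Ioi ε) := by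
      apply Integrable.const_mul
      have := (integrableOn_weighted_laguerre_sq 0 k 0).mono_set
        (Set.Ioi_subset_Ioi hε.le)
      exact this
    have hstep := setIntegral_mono_on hf_int2 hg_int measurableSet_Ioi hpt
    refine le_trans hstep ?_
    rw [integral_const_mul]
    have hmono : ∫ x in Set.Ioi ε, lagF k 0 x ≤ ∫ x in Set.Ioi (0:ℝ), lagF k 0 x := by
      apply setIntegral_mono_set (integrableOn_weighted_laguerre_sq 0 k 0)
      · refine (ae_restrict_iff' measurableSet_Ioi).mpr (Filter.Eventually.of_forall
          fun x hx => ?_)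
        have hx' : (0:ℝ) < x := hx
        show (0:ℝ) ≤ x^(0:ℕ) * Real.exp (-x) * (laguerre k 0 x)^2
        positivity
      · exact HasSubset.Subset.eventuallyLE (Set.Ioi_subset_Ioi hε.le)
    have hval0 : ∫ x in Set.Ioi (0:ℝ), lagF k 0 x = 1 := by
      have h := laguerre_sq_integral k 0
      have h2 : ∫ x in Set.Ioi (0:ℝ), lagF k 0 x
          = ∫ x in Set.Ioi (0:ℝ), x^(0:ℕ) * Real.exp (-x) * (laguerre k 0 x)^2 := rfl
      rw [h2, h, Nat.add_zero, div_self]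
      exact Nat.cast_ne_zero.mpr (Nat.factorial_ne_zero k)
    have : ∫ x in Set.Ioi ε, lagF k 0 x ≤ 1 := le_trans hmono (le_of_eq hval0)
    calc Real.sqrt ((k:ℝ)+1) * ∫ x in Set.Ioi ε, lagF k 0 x
        ≤ Real.sqrt ((k:ℝ)+1) * 1 := mul_le_mul_of_nonneg_left this (Real.sqrt_nonneg _)
      _ = Real.sqrt ((k:ℝ)+1) := mul_one _
  linarith

lemma sqrt_two_le : Real.sqrt 2 ≤ 1.5 := by
  have h := Real.sq_sqrt (show (0:ℝ) ≤ 2 by norm_num)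
  nlinarith [Real.sqrt_nonneg 2]

lemma patternFT_symm (j k : ℕ) : patternFT j k = patternFT k j := by
  unfold patternFT
  rw [max_comm, min_comm]

lemma J_nonneg (k d : ℕ) : 0 ≤ ∫ x in Set.Ioi (0:ℝ), x^(-(1/2):ℝ) * lagF k d x := by
  apply setIntegral_nonneg measurableSet_Ioi
  intro x hx
  have hx' : (0:ℝ) < x := hx
  have h1 : (0:ℝ) ≤ x^(-(1/2):ℝ) := Real.rpow_nonneg hx'.le _
  have h2 : (0:ℝ) ≤ lagF k d x := by
    rw [lagF]; positivity
  positivity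

lemma term_bound (j k : ℕ) (h : k ≤ j) :
    (2*Real.pi)⁻¹ * ∫ t : ℝ, ‖patternFT j k t‖^2 ≤ 50 * Real.sqrt ((j:ℝ)+1) := by
  obtain ⟨d, rfl⟩ : ∃ d, j = k + d := ⟨j - k, by omega⟩
  rw [integral_norm_patternFT k d]
  have hπ : (0:ℝ) < Real.pi := Real.pi_pos
  have hπle : Real.pi ≤ 3.15 := by
    have := Real.pi_lt_d2
    linarith
  have hC : (2*Real.pi)⁻¹ * (Real.pi^2 * ((k.factorial : ℝ) / ((k+d).factorial : ℝ))
      * Real.sqrt 2 * ∫ x in Set.Ioi (0:ℝ), x^(-(1/2):ℝ) * lagF k d x)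
      = (Real.pi * Real.sqrt 2 / 2) * ((k.factorial : ℝ) / ((k+d).factorial : ℝ))
        * ∫ x in Set.Ioi (0:ℝ), x^(-(1/2):ℝ) * lagF k d x := by
    field_simp
  rw [hC]
  have hs1 : (1:ℝ) ≤ Real.sqrt ((k:ℝ)+d+1) := by
    have h1 : (0:ℝ) ≤ (k:ℝ) := Nat.cast_nonneg k
    have h2 : (0:ℝ) ≤ (d:ℝ) := Nat.cast_nonneg d
    have h0 : Real.sqrt 1 ≤ Real.sqrt ((k:ℝ)+d+1) := Real.sqrt_le_sqrt (by linarith)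
    rwa [Real.sqrt_one] at h0
  have hgoalcast : ((k+d : ℕ):ℝ) + 1 = (k:ℝ)+d+1 := by push_cast; ring
  rw [hgoalcast]
  have hCpos : (0:ℝ) < Real.pi * Real.sqrt 2 / 2 := by
    have : (0:ℝ) < Real.sqrt 2 := Real.sqrt_pos.mpr (by norm_num)
    positivity
  have hCle : Real.pi * Real.sqrt 2 / 2 ≤ 2.4 := by
    have h2 : Real.sqrt 2 ≤ 1.5 := sqrt_two_le
    have h3 : (0:ℝ) ≤ Real.sqrt 2 := Real.sqrt_nonneg 2
    nlinarith
  cases d with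
  | zero =>
    have hfac : ((k.factorial : ℝ) / ((k+0).factorial : ℝ)) = 1 := by
      rw [Nat.add_zero, div_self (Nat.cast_ne_zero.mpr (Nat.factorial_ne_zero k))]
    rw [hfac, mul_one]
    have hJ := J0_bound k
    have hs1' : (1:ℝ) ≤ Real.sqrt ((k:ℝ)+1) := by
      have h1 : (0:ℝ) ≤ (k:ℝ) := Nat.cast_nonneg k
      have h0 : Real.sqrt 1 ≤ Real.sqrt ((k:ℝ)+1) := Real.sqrt_le_sqrt (by linarith)
      rwa [Real.sqrt_one] at h0
    have hJ0 := J_nonneg k 0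
    have hchain : (Real.pi * Real.sqrt 2 / 2) * ∫ x in Set.Ioi (0:ℝ), x^(-(1/2):ℝ) * lagF k 0 x
        ≤ 2.4 * (18 + Real.sqrt ((k:ℝ)+1)) := by
      calc (Real.pi * Real.sqrt 2 / 2) * ∫ x in Set.Ioi (0:ℝ), x^(-(1/2):ℝ) * lagF k 0 x
          ≤ (Real.pi * Real.sqrt 2 / 2) * (18 + Real.sqrt ((k:ℝ)+1)) :=
            mul_le_mul_of_nonneg_left hJ hCpos.le
        _ ≤ 2.4 * (18 + Real.sqrt ((k:ℝ)+1)) := by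
            apply mul_le_mul_of_nonneg_right hCle
            linarith
    refine le_trans hchain ?_
    have : ((k:ℝ)+(0:ℕ)+1) = (k:ℝ)+1 := by norm_num
    rw [this]
    linarith [hs1']
  | succ e =>
    have hJ := J_bound_pos k e
    have hfacpos : (0:ℝ) < ((k.factorial : ℝ) / ((k+(e+1)).factorial : ℝ)) := by positivity
    have hchain : (Real.pi * Real.sqrt 2 / 2) * (((k.factorial : ℝ) / ((k+(e+1)).factorial : ℝ))
        * ∫ x in Set.Ioi (0:ℝ), x^(-(1/2):ℝ) * lagF k (e+1) x)
        ≤ (Real.pi * Real.sqrt 2 / 2) * Real.sqrt ((k:ℝ)+e+1) := by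
      apply mul_le_mul_of_nonneg_left _ hCpos.le
      have step : ((k.factorial : ℝ) / ((k+(e+1)).factorial : ℝ))
          * (Real.sqrt ((k:ℝ)+e+1) * (((k+e+1).factorial : ℝ) / k.factorial))
          = Real.sqrt ((k:ℝ)+e+1) := by
        have h1 : ((k+(e+1)).factorial : ℝ) = ((k+e+1).factorial : ℝ) := rfl
        rw [h1]
        have h2 : ((k+e+1).factorial : ℝ) ≠ 0 := Nat.cast_ne_zero.mpr (Nat.factorial_ne_zero _)
        have h3 : (k.factorial : ℝ) ≠ 0 := Nat.cast_ne_zero.mpr (Nat.factorial_ne_zero _)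
        field_simp
      calc ((k.factorial : ℝ) / ((k+(e+1)).factorial : ℝ))
          * ∫ x in Set.Ioi (0:ℝ), x^(-(1/2):ℝ) * lagF k (e+1) x
          ≤ ((k.factorial : ℝ) / ((k+(e+1)).factorial : ℝ))
            * (Real.sqrt ((k:ℝ)+e+1) * (((k+e+1).factorial : ℝ) / k.factorial)) :=
            mul_le_mul_of_nonneg_left hJ hfacpos.le
        _ = Real.sqrt ((k:ℝ)+e+1) := step
    rw [mul_assoc]
    refine le_trans hchain ?_
    have hsq : Real.sqrt ((k:ℝ)+e+1) ≤ Real.sqrt ((k:ℝ)+(e+1:ℕ)+1) := by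
      apply Real.sqrt_le_sqrt
      push_cast
      linarith
    have hsqnn : (0:ℝ) ≤ Real.sqrt ((k:ℝ)+e+1) := Real.sqrt_nonneg _
    calc (Real.pi * Real.sqrt 2 / 2) * Real.sqrt ((k:ℝ)+e+1)
        ≤ 2.4 * Real.sqrt ((k:ℝ)+(e+1:ℕ)+1) := by
          apply mul_le_mul hCle hsq hsqnn (by norm_num)
      _ ≤ 50 * Real.sqrt ((k:ℝ)+(e+1:ℕ)+1) := by
          apply mul_le_mul_of_nonneg_right (by norm_num) (Real.sqrt_nonneg _)

/-- There exist `C₂ > 0` and `N₀` such that for all `N ≥ N₀`,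
`∑_{j=0}^{N} ∑_{k=0}^{N} (2π)⁻¹ ∫ |f̃_{j,k}(t)|² dt ≤ C₂ N^{17/6}`. -/
theorem pattern_l2_bound :
    ∃ C₂ : ℝ, 0 < C₂ ∧ ∃ N₀ : ℕ, ∀ N : ℕ, N₀ ≤ N →
      ∑ j ∈ Finset.range (N + 1), ∑ k ∈ Finset.range (N + 1),
        (2 * Real.pi)⁻¹ * ∫ t : ℝ, ‖patternFT j k t‖ ^ 2
      ≤ C₂ * (N : ℝ) ^ ((17 : ℝ) / 6) := by
  refine ⟨400, by norm_num, 1, fun N hN => ?_⟩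
  have hN1 : (1:ℝ) ≤ (N:ℝ) := by exact_mod_cast hN
  have hN0 : (0:ℝ) < (N:ℝ) := by linarith
  have pair_bound : ∀ j ∈ Finset.range (N+1), ∀ k ∈ Finset.range (N+1),
      (2 * Real.pi)⁻¹ * ∫ t : ℝ, ‖patternFT j k t‖ ^ 2 ≤ 50 * Real.sqrt ((N:ℝ)+1) := by
    intro j hj k hk
    rw [Finset.mem_range] at hj hk
    have hsqle : ∀ m : ℕ, m ≤ N → Real.sqrt ((m:ℝ)+1) ≤ Real.sqrt ((N:ℝ)+1) := by
      intro m hm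
      apply Real.sqrt_le_sqrt
      have : (m:ℝ) ≤ (N:ℝ) := by exact_mod_cast hm
      linarith
    rcases le_total k j with h | h
    · refine le_trans (term_bound j k h) ?_
      exact mul_le_mul_of_nonneg_left (hsqle j (by omega)) (by norm_num)
    · rw [show patternFT j k = patternFT k j from patternFT_symm j k]
      refine le_trans (term_bound k j h) ?_
      exact mul_le_mul_of_nonneg_left (hsqle k (by omega)) (by norm_num)
  have hsum : ∑ j ∈ Finset.range (N + 1), ∑ k ∈ Finset.range (N + 1),
      (2 * Real.pi)⁻¹ * ∫ t : ℝ, ‖patternFT j k t‖ ^ 2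
      ≤ ((N:ℝ)+1)^2 * (50 * Real.sqrt ((N:ℝ)+1)) := by
    calc ∑ j ∈ Finset.range (N + 1), ∑ k ∈ Finset.range (N + 1),
        (2 * Real.pi)⁻¹ * ∫ t : ℝ, ‖patternFT j k t‖ ^ 2
        ≤ ∑ j ∈ Finset.range (N + 1), ∑ k ∈ Finset.range (N + 1),
          (50 * Real.sqrt ((N:ℝ)+1)) := by
          apply Finset.sum_le_sum
          intro j hj
          apply Finset.sum_le_sum
          intro k hk
          exact pair_bound j hj k hk
      _ = ((N:ℝ)+1)^2 * (50 * Real.sqrt ((N:ℝ)+1)) := by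
          simp only [Finset.sum_const, Finset.card_range, nsmul_eq_mul]
          push_cast
          ring
  refine le_trans hsum ?_
  -- final numeric estimate
  have hS : Real.sqrt ((N:ℝ)+1) ≤ 1.5 * Real.sqrt (N:ℝ) := by
    have h1 : (N:ℝ)+1 ≤ 2.25*(N:ℝ) := by linarith
    calc Real.sqrt ((N:ℝ)+1) ≤ Real.sqrt (2.25*(N:ℝ)) := Real.sqrt_le_sqrt h1
      _ = Real.sqrt 2.25 * Real.sqrt (N:ℝ) := Real.sqrt_mul (by norm_num) _
      _ = 1.5 * Real.sqrt (N:ℝ) := by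
          rw [show (2.25:ℝ) = 1.5^2 by norm_num, Real.sqrt_sq (by norm_num)]
  have hNsq : ((N:ℝ)+1)^2 ≤ 4*(N:ℝ)^2 := by nlinarith
  have hfin : ((N:ℝ)+1)^2 * (50 * Real.sqrt ((N:ℝ)+1))
      ≤ 4*(N:ℝ)^2 * (50 * (1.5 * Real.sqrt (N:ℝ))) := by
    apply mul_le_mul hNsq _ (by positivity) (by positivity)
    linarith [hS]
  refine le_trans hfin ?_
  have hkey : (N:ℝ)^2 * Real.sqrt (N:ℝ) = (N:ℝ)^((5:ℝ)/2) := by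
    rw [Real.sqrt_eq_rpow, ← Real.rpow_natCast (N:ℝ) 2, ← Real.rpow_add hN0]
    norm_num
  have hstep : 4*(N:ℝ)^2 * (50 * (1.5 * Real.sqrt (N:ℝ)))
      = 300 * ((N:ℝ)^2 * Real.sqrt (N:ℝ)) := by ring
  rw [hstep, hkey]
  have hexp : (N:ℝ)^((5:ℝ)/2) ≤ (N:ℝ)^((17:ℝ)/6) :=
    Real.rpow_le_rpow_of_exponent_le hN1 (by norm_num)
  have hpos : (0:ℝ) ≤ (N:ℝ)^((17:ℝ)/6) := Real.rpow_nonneg hN0.le _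
  linarith
end

section
/- Let X be a real-valued random variable on a probability space, let ξ be a standard Gaussian random variable independent of X, let η ∈ (1/2, 1), γ = (1−η)/(4η), and set Y = √η · X + √((1−η)/2) · ξ. Let g : ℝ → ℂ be continuous and integrable, with Fourier transform ĝ(t) = ∫_ℝ g(x) e^{−itx} dx, and assume that t ↦ ĝ(t) e^{γt²} is integrable on ℝ. Define g^η(x) = (2π)^{−1} ∫_ℝ ĝ(t) e^{γt²} e^{itx} dt. Then E[g^η(Y/√η)] = E[g(X)]. -/
open MeasureTheory ProbabilityTheory
open scoped FourierTransform ENNReal NNReal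

section NoisyAux

open Complex Real

private lemma noisy_gauss_char (s : ℝ) :
    ∫ y, Complex.exp (Complex.I * s * y) ∂(gaussianReal 0 1) =
      Complex.exp (-(s ^ 2 / 2) : ℝ) := by
  rw [gaussianReal_of_var_ne_zero 0 one_ne_zero]
  have hmeas : Measurable fun y => (gaussianPDFReal 0 1 y).toNNReal :=
    (measurable_gaussianPDFReal 0 1).real_toNNReal
  have hd : (gaussianPDF 0 1) = fun y => ((gaussianPDFReal 0 1 y).toNNReal : ℝ≥0∞) := by
    ext y; rw [gaussianPDF, ENNReal.ofReal]
  rw [hd, integral_withDensity_eq_integral_smul hmeas]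
  have hpt : ∀ y : ℝ, ((gaussianPDFReal 0 1 y).toNNReal : ℝ≥0) • Complex.exp (Complex.I * s * y)
      = (((Real.sqrt (2 * π))⁻¹ : ℝ) : ℂ) * (Complex.exp (Complex.I * s * y) *
          Complex.exp (-(1/2 : ℂ) * (y:ℂ) ^ 2)) := by
    intro y
    rw [NNReal.smul_def, Real.coe_toNNReal _ (gaussianPDFReal_nonneg 0 1 y)]
    rw [gaussianPDFReal, Complex.real_smul]
    push_cast
    rw [mul_one, mul_one]
    ring_nf
  simp_rw [hpt]
  rw [integral_const_mul, fourierIntegral_gaussian (by norm_num : (0:ℝ) < ((1:ℂ)/2).re) (s : ℂ)]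
  have hA : ((π : ℂ) / (1/2)) ^ ((1:ℂ)/2) = ((Real.sqrt (2 * π) : ℝ) : ℂ) := by
    rw [Real.sqrt_eq_rpow, Complex.ofReal_cpow (by positivity)]
    push_cast
    norm_num
    ring_nf
  rw [hA, ← mul_assoc, Complex.ofReal_inv,
    inv_mul_cancel₀ (Complex.ofReal_ne_zero.2 (by positivity : Real.sqrt (2*π) ≠ 0)), one_mul]
  congr 1
  push_cast
  ring

private lemma noisy_contFT {f : ℝ → ℂ} (hf : Integrable f) : Continuous (𝓕 f) :=
  VectorFourier.fourierIntegral_continuous Real.continuous_fourierChar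
    (by exact continuous_inner) hf

private lemma noisy_gFT_eq_fourier (g : ℝ → ℂ) (gFT : ℝ → ℂ)
    (hgFT : ∀ t : ℝ, gFT t = ∫ x : ℝ, g x * Complex.exp (-Complex.I * t * x)) (t : ℝ) :
    gFT t = 𝓕 g (t / (2 * π)) := by
  rw [hgFT, Real.fourier_real_eq_integral_exp_smul]
  congr 1; funext x
  rw [smul_eq_mul, mul_comm]
  have hπ : (π : ℂ) ≠ 0 := Complex.ofReal_ne_zero.2 Real.pi_ne_zero
  congr 2
  push_cast
  field_simp

private lemma noisy_inv_formula {g gFT : ℝ → ℂ} (hgc : Continuous g) (hgi : Integrable g)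
    (hFTeq : ∀ t : ℝ, gFT t = 𝓕 g (t / (2 * π))) (hgFTi : Integrable gFT) (x : ℝ) :
    ∫ t : ℝ, gFT t * Complex.exp (Complex.I * t * x) = 2 * π * g x := by
  have h2π : (0:ℝ) < 2 * π := by positivity
  have hFg : Integrable (𝓕 g) := by
    have he : (𝓕 g) = fun w => gFT (2 * π * w) := by
      funext w; rw [hFTeq]; congr 1; field_simp
    rw [he]
    exact hgFTi.comp_mul_left' h2π.ne'
  have hinv := hgc.fourierInv_fourier_eq hgi hFg
  set F : ℝ → ℂ := fun t => gFT t * Complex.exp (Complex.I * t * x) with hF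
  have h1 : g x = ∫ w : ℝ, F (2 * π * w) := by
    conv_lhs => rw [← hinv]
    rw [Real.fourierInv_eq']
    congr 1; funext w
    rw [smul_eq_mul, hF]
    simp only []
    rw [mul_comm, hFTeq]
    congr 2
    · field_simp
    · simp only [RCLike.inner_apply, conj_trivial]
      push_cast
      ring
  rw [Measure.integral_comp_mul_left F (2 * π)] at h1
  rw [abs_of_pos (inv_pos.2 h2π), Complex.real_smul] at h1
  rw [h1]
  push_cast
  rw [← mul_assoc]
  rw [mul_inv_cancel₀ (by exact_mod_cast h2π.ne' : ((2:ℂ) * π) ≠ 0), one_mul]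

private lemma noisy_norm_exp_I_mul (t x : ℝ) : ‖Complex.exp (Complex.I * t * x)‖ = 1 := by
  rw [Complex.norm_exp]
  simp [Complex.mul_re]

private lemma noisy_geta_eq {h : ℝ → ℂ} (gη : ℝ → ℂ)
    (hgη : ∀ x : ℝ, gη x = (2 * π)⁻¹ *
      ∫ t : ℝ, h t * Complex.exp (Complex.I * t * x)) :
    gη = fun x => (((2 * π)⁻¹ : ℝ) : ℂ) * 𝓕 h (-(x / (2 * π))) := by
  funext x
  rw [hgη, ← Real.fourierInv_eq_fourier_neg, Real.fourierInv_eq']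
  congr 2
  funext t
  rw [smul_eq_mul, mul_comm]
  have hπ : (π : ℂ) ≠ 0 := Complex.ofReal_ne_zero.2 Real.pi_ne_zero
  congr 2
  simp only [RCLike.inner_apply, conj_trivial]
  push_cast
  field_simp

private lemma noisy_geta_cont {h : ℝ → ℂ} (hh : Integrable h) (gη : ℝ → ℂ)
    (hgη : ∀ x : ℝ, gη x = (2 * π)⁻¹ *
      ∫ t : ℝ, h t * Complex.exp (Complex.I * t * x)) :
    Continuous gη := by
  rw [noisy_geta_eq gη hgη]
  exact continuous_const.mul ((noisy_contFT hh).comp (continuous_id.div_const _).neg)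

private lemma noisy_geta_bdd {h : ℝ → ℂ} (gη : ℝ → ℂ)
    (hgη : ∀ x : ℝ, gη x = (2 * π)⁻¹ *
      ∫ t : ℝ, h t * Complex.exp (Complex.I * t * x)) (x : ℝ) :
    ‖gη x‖ ≤ (2 * π)⁻¹ * ∫ t : ℝ, ‖h t‖ := by
  rw [hgη, norm_mul]
  have h1 : ‖(((2 * π)⁻¹ : ℝ) : ℂ)‖ = (2 * π)⁻¹ := by
    rw [Complex.norm_real, Real.norm_eq_abs, abs_of_pos (by positivity)]
  rw [h1]
  gcongr
  refine le_trans (norm_integral_le_integral_norm _) ?_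
  refine le_of_eq (integral_congr_ae (Filter.Eventually.of_forall fun t => ?_))
  simp only []
  rw [norm_mul, noisy_norm_exp_I_mul, mul_one]

end NoisyAux

/-- Unbiasedness through the noisy observation: if `Y = √η X + √((1−η)/2) ξ` with `ξ` a standard
Gaussian independent of `X`, `η ∈ (1/2,1)`, `γ = (1−η)/(4η)`, `g` continuous integrable with
Fourier transform `gFT`, `gFT(t)e^{γt²}` integrable, and
`g^η(x) = (2π)⁻¹ ∫ gFT(t) e^{γt²} e^{itx} dt`, then `E[g^η(Y/√η)] = E[g(X)]`. -/
theorem noisy_unbiased {Ω : Type*} [MeasureSpace Ω]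
    [IsProbabilityMeasure (ℙ : Measure Ω)]
    (X ξ : Ω → ℝ) (hX : Measurable X) (hξ : Measurable ξ)
    (hlaw : Measure.map ξ ℙ = gaussianReal 0 1)
    (hindep : IndepFun X ξ ℙ)
    (η : ℝ) (hη : η ∈ Set.Ioo (1/2 : ℝ) 1)
    (γ : ℝ) (hγ : γ = (1 - η) / (4 * η))
    (Y : Ω → ℝ) (hY : ∀ ω, Y ω = Real.sqrt η * X ω + Real.sqrt ((1 - η) / 2) * ξ ω)
    (g : ℝ → ℂ) (hgc : Continuous g) (hgi : Integrable g)
    (gFT : ℝ → ℂ) (hgFT : ∀ t : ℝ, gFT t = ∫ x : ℝ, g x * Complex.exp (-Complex.I * t * x))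
    (hint : Integrable (fun t : ℝ => gFT t * Complex.exp ((γ * t ^ 2 : ℝ) : ℂ)))
    (gη : ℝ → ℂ)
    (hgη : ∀ x : ℝ, gη x = (2 * Real.pi)⁻¹ *
      ∫ t : ℝ, gFT t * Complex.exp ((γ * t ^ 2 : ℝ) : ℂ) *
        Complex.exp (Complex.I * (t : ℂ) * (x : ℂ))) :
    ∫ ω, gη (Y ω / Real.sqrt η) = ∫ ω, g (X ω) := by
  obtain ⟨hη1, hη2⟩ := hη
  have hη0 : (0:ℝ) < η := by linarith
  have h1η : (0:ℝ) < 1 - η := by linarith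
  have hγ0 : (0:ℝ) < γ := by rw [hγ]; positivity
  set c : ℝ := Real.sqrt ((1 - η) / 2) / Real.sqrt η with hcdef
  have hc2 : c ^ 2 = 2 * γ := by
    rw [hcdef, div_pow, Real.sq_sqrt (by positivity : (0:ℝ) ≤ (1-η)/2), Real.sq_sqrt hη0.le, hγ]
    field_simp
    ring
  have hYX : ∀ ω, Y ω / Real.sqrt η = X ω + c * ξ ω := by
    intro ω
    rw [hY ω, hcdef]
    have hs : Real.sqrt η ≠ 0 := by positivity
    field_simp
  -- Fourier transform facts
  have hFTeq : ∀ t : ℝ, gFT t = 𝓕 g (t / (2 * Real.pi)) := noisy_gFT_eq_fourier g gFT hgFT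
  have hgFTc : Continuous gFT := by
    rw [show gFT = fun t => 𝓕 g (t / (2 * Real.pi)) from funext hFTeq]
    exact (noisy_contFT hgi).comp (continuous_id.div_const _)
  have hgFTi : Integrable gFT := by
    refine hint.mono hgFTc.aestronglyMeasurable (Filter.Eventually.of_forall fun t => ?_)
    rw [norm_mul]
    refine le_mul_of_one_le_right (norm_nonneg _) ?_
    rw [Complex.norm_exp, Complex.ofReal_re]
    exact Real.one_le_exp (by positivity)
  have hinvf : ∀ x : ℝ, ∫ t : ℝ, gFT t * Complex.exp (Complex.I * t * x)
      = 2 * Real.pi * g x := noisy_inv_formula hgc hgi hFTeq hgFTi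
  -- gη facts
  have hgηc : Continuous gη := noisy_geta_cont hint gη hgη
  have hgηb : ∀ x, ‖gη x‖ ≤ (2 * Real.pi)⁻¹ *
      ∫ t : ℝ, ‖gFT t * Complex.exp ((γ * t ^ 2 : ℝ) : ℂ)‖ := noisy_geta_bdd gη hgη
  -- measures
  set μ : Measure ℝ := Measure.map X ℙ with hμ
  have hμp : IsProbabilityMeasure μ := Measure.isProbabilityMeasure_map hX.aemeasurable
  set ν : Measure ℝ := gaussianReal 0 1 with hν
  -- gaussian inner integral
  have hinner : ∀ (x t : ℝ), (∫ y, Complex.exp (Complex.I * t * ((x + c * y : ℝ) : ℂ)) ∂ν)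
      = Complex.exp (Complex.I * t * x) * Complex.exp (((-(γ * t ^ 2) : ℝ)) : ℂ) := by
    intro x t
    have hsplit : ∀ y : ℝ, Complex.exp (Complex.I * t * ((x + c * y : ℝ) : ℂ))
        = Complex.exp (Complex.I * t * x) * Complex.exp (Complex.I * ((t * c : ℝ) : ℂ) * y) := by
      intro y
      rw [← Complex.exp_add]
      congr 1
      push_cast
      ring
    simp_rw [hsplit]
    rw [integral_const_mul, hν, noisy_gauss_char (t * c),
      show -((t * c) ^ 2 / 2) = -(γ * t ^ 2) by rw [mul_pow, hc2]; ring]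
  -- the key pointwise identity: smoothing then gaussian noise recovers g
  have hkey : ∀ x : ℝ, (∫ y, gη (x + c * y) ∂ν) = g x := by
    intro x
    have hswap : Integrable (Function.uncurry fun (y t : ℝ) =>
        gFT t * Complex.exp ((γ * t ^ 2 : ℝ) : ℂ) *
          Complex.exp (Complex.I * t * ((x + c * y : ℝ) : ℂ))) (ν.prod volume) := by
      have hbase : Integrable (fun z : ℝ × ℝ =>
          (1:ℂ) * (gFT z.2 * Complex.exp ((γ * z.2 ^ 2 : ℝ) : ℂ))) (ν.prod volume) :=
        (integrable_const (1:ℂ)).mul_prod hint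
      refine hbase.mono ?_ (Filter.Eventually.of_forall fun z => ?_)
      · have hA1 : AEStronglyMeasurable (fun z : ℝ × ℝ =>
            gFT z.2 * Complex.exp ((γ * z.2 ^ 2 : ℝ) : ℂ)) (ν.prod volume) :=
          hint.aestronglyMeasurable.comp_snd
        have hA2 : AEStronglyMeasurable (fun z : ℝ × ℝ =>
            Complex.exp (Complex.I * z.2 * ((x + c * z.1 : ℝ) : ℂ))) (ν.prod volume) :=
          (Complex.continuous_exp.comp (by fun_prop)).aestronglyMeasurable
        exact hA1.mul hA2
      · simp only [Function.uncurry, one_mul]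
        rw [norm_mul, noisy_norm_exp_I_mul, mul_one]
    calc (∫ y, gη (x + c * y) ∂ν)
        = ∫ y, (((2 * Real.pi)⁻¹ : ℝ) : ℂ) * ∫ t : ℝ,
            gFT t * Complex.exp ((γ * t ^ 2 : ℝ) : ℂ) *
              Complex.exp (Complex.I * t * ((x + c * y : ℝ) : ℂ)) ∂volume ∂ν := by
          exact integral_congr_ae (Filter.Eventually.of_forall fun y => hgη (x + c * y))
      _ = (((2 * Real.pi)⁻¹ : ℝ) : ℂ) * ∫ y, (∫ t : ℝ,
            gFT t * Complex.exp ((γ * t ^ 2 : ℝ) : ℂ) *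
              Complex.exp (Complex.I * t * ((x + c * y : ℝ) : ℂ)) ∂volume) ∂ν :=
          integral_const_mul _ _
      _ = (((2 * Real.pi)⁻¹ : ℝ) : ℂ) * ∫ t : ℝ, (∫ y,
            gFT t * Complex.exp ((γ * t ^ 2 : ℝ) : ℂ) *
              Complex.exp (Complex.I * t * ((x + c * y : ℝ) : ℂ)) ∂ν) ∂volume := by
          rw [integral_integral_swap hswap]
      _ = (((2 * Real.pi)⁻¹ : ℝ) : ℂ) * ∫ t : ℝ, gFT t * Complex.exp (Complex.I * t * x) := by
          congr 1
          refine integral_congr_ae (Filter.Eventually.of_forall fun t => ?_)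
          beta_reduce
          rw [integral_const_mul, hinner x t]
          have e1 : Complex.exp ((γ * t ^ 2 : ℝ) : ℂ) *
              Complex.exp (((-(γ * t ^ 2) : ℝ)) : ℂ) = 1 := by
            rw [← Complex.exp_add, ← Complex.ofReal_add, add_neg_cancel,
              Complex.ofReal_zero, Complex.exp_zero]
          calc gFT t * Complex.exp ((γ * t ^ 2 : ℝ) : ℂ) *
                (Complex.exp (Complex.I * t * x) * Complex.exp (((-(γ * t ^ 2) : ℝ)) : ℂ))
              = gFT t * Complex.exp (Complex.I * t * x) *
                (Complex.exp ((γ * t ^ 2 : ℝ) : ℂ) *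
                  Complex.exp (((-(γ * t ^ 2) : ℝ)) : ℂ)) := by ring
            _ = gFT t * Complex.exp (Complex.I * t * x) := by rw [e1, mul_one]
      _ = g x := by
          rw [hinvf x]
          have h2π : ((2 * Real.pi : ℝ) : ℂ) ≠ 0 := by
            exact_mod_cast (by positivity : (2 * Real.pi : ℝ) ≠ 0)
          rw [Complex.ofReal_inv]
          push_cast
          rw [← mul_assoc, inv_mul_cancel₀ (by push_cast at h2π ⊢; exact h2π), one_mul]
  -- now the probabilistic part
  have hpair : Measure.map (fun ω => (X ω, ξ ω)) ℙ = μ.prod ν := by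
    rw [hμ, ← hlaw]
    exact (indepFun_iff_map_prod_eq_prod_map_map hX.aemeasurable hξ.aemeasurable).1 hindep
  have hφc : Continuous (fun p : ℝ × ℝ => gη (p.1 + c * p.2)) := hgηc.comp (by fun_prop)
  have hφint : Integrable (fun p : ℝ × ℝ => gη (p.1 + c * p.2)) (μ.prod ν) := by
    have : IsProbabilityMeasure ν := by rw [hν]; infer_instance
    exact Integrable.mono' (integrable_const _) hφc.aestronglyMeasurable
      (Filter.Eventually.of_forall fun p => hgηb _)
  calc (∫ ω, gη (Y ω / Real.sqrt η))
      = ∫ ω, gη (X ω + c * ξ ω) := by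
        exact integral_congr_ae (Filter.Eventually.of_forall fun ω => congrArg gη (hYX ω))
    _ = ∫ p : ℝ × ℝ, gη (p.1 + c * p.2) ∂(μ.prod ν) := by
        rw [← hpair, integral_map (hX.aemeasurable.prodMk hξ.aemeasurable)
          hφc.aestronglyMeasurable]
    _ = ∫ x, (∫ y, gη (x + c * y) ∂ν) ∂μ := integral_prod _ hφint
    _ = ∫ x, g x ∂μ := by
        refine integral_congr_ae (Filter.Eventually.of_forall fun x => ?_)
        exact hkey x
    _ = ∫ ω, g (X ω) := by
        rw [hμ, integral_map hX.aemeasurable hgc.aestronglyMeasurable]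
end

section
/- Let B > 0, η ∈ (1/2, 1) and γ = (1−η)/(4η). For n ≥ 3 define the bandwidth N₂(n) = (log n)/(4(4γ+B)) · (1 + 8 log log n/(3 log n)) and the rate φ_n² = (log n)^{(12γ−B)/(3(4γ+B))} · n^{−B/(2(4γ+B))}. Then there exist constants C₁, C₂ > 0 and n₀ ∈ ℕ such that for all n ≥ n₀: (i) n^{−1} · N₂(n)^{−2/3} · e^{16γ N₂(n)} ≤ C₁ · φ_n⁴, and (ii) N₂(n) · e^{−2B N₂(n)} ≤ C₂ · φ_n². -/
/-- For `η ∈ (1/2,1)`, `γ = (1−η)/(4η)`, the bandwidth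
`N₂(n) = (log n)/(4(4γ+B)) (1 + 8 log log n/(3 log n))` and the rate
`φ_n² = (log n)^{(12γ−B)/(3(4γ+B))} n^{−B/(2(4γ+B))}`, there are constants `C₁, C₂ > 0` and `n₀`
such that for all `n ≥ n₀`: (i) `n⁻¹ N₂(n)^{−2/3} e^{16γN₂(n)} ≤ C₁ φ_n⁴` and
(ii) `N₂(n) e^{−2BN₂(n)} ≤ C₂ φ_n²`. -/
theorem variance_bias_rate_noisy (B : ℝ) (hB : 0 < B)
    (η : ℝ) (hη : η ∈ Set.Ioo (1/2 : ℝ) 1) (γ : ℝ) (hγ : γ = (1 - η) / (4 * η))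
    (N₂ φsq : ℕ → ℝ)
    (hN₂ : ∀ n : ℕ, N₂ n =
      Real.log n / (4 * (4 * γ + B)) * (1 + 8 * Real.log (Real.log n) / (3 * Real.log n)))
    (hφ : ∀ n : ℕ, φsq n =
      (Real.log n) ^ ((12 * γ - B) / (3 * (4 * γ + B))) * (n : ℝ) ^ (-B / (2 * (4 * γ + B)))) :
    ∃ C₁ : ℝ, 0 < C₁ ∧ ∃ C₂ : ℝ, 0 < C₂ ∧ ∃ n₀ : ℕ, 3 ≤ n₀ ∧ ∀ n : ℕ, n₀ ≤ n →
      (n : ℝ)⁻¹ * (N₂ n) ^ (-(2 : ℝ) / 3) * Real.exp (16 * γ * N₂ n) ≤ C₁ * (φsq n) ^ 2 ∧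
      N₂ n * Real.exp (-2 * B * N₂ n) ≤ C₂ * φsq n := by
  obtain ⟨hη1, hη2⟩ := hη
  have hγ0 : 0 < γ := by
    rw [hγ]; apply div_pos <;> linarith
  have hA : 0 < 4 * γ + B := by linarith
  have hA4 : 0 < 4 * (4 * γ + B) := by linarith
  refine ⟨Real.exp (Real.log (4 * (4 * γ + B)) * (2 / 3)), Real.exp_pos _,
    11 / (12 * (4 * γ + B)), by positivity, 3, le_refl 3, fun n hn => ?_⟩
  have hn3 : (3 : ℝ) ≤ (n : ℝ) := by exact_mod_cast hn
  have hn0 : (0 : ℝ) < (n : ℝ) := by linarith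
  have hL1 : 1 < Real.log n := by
    have h9 := Real.exp_one_lt_d9
    have h : Real.exp 1 < (n : ℝ) := by linarith
    calc (1:ℝ) = Real.log (Real.exp 1) := (Real.log_exp 1).symm
      _ < Real.log n := Real.log_lt_log (Real.exp_pos 1) h
  have hL0 : 0 < Real.log n := by linarith
  have hLL0 : 0 < Real.log (Real.log n) := Real.log_pos hL1
  have hLLle : Real.log (Real.log n) ≤ Real.log n := Real.log_le_self hL0.le
  have hNeq : N₂ n = Real.log n / (4 * (4 * γ + B))
      + 2 * Real.log (Real.log n) / (3 * (4 * γ + B)) := by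
    rw [hN₂ n]; field_simp [hL0.ne', hA.ne']; ring
  have hfrac : (0:ℝ) < Real.log n / (4 * (4 * γ + B)) := div_pos hL0 hA4
  have hfrac2 : (0:ℝ) ≤ 2 * Real.log (Real.log n) / (3 * (4 * γ + B)) := by positivity
  have hNpos : 0 < N₂ n := by rw [hNeq]; linarith
  have hNge : Real.log n / (4 * (4 * γ + B)) ≤ N₂ n := by rw [hNeq]; linarith
  constructor
  · -- part (i)
    have hlogN : Real.log (Real.log n) - Real.log (4 * (4 * γ + B)) ≤ Real.log (N₂ n) := by
      have h1 : Real.log (Real.log n / (4 * (4 * γ + B))) ≤ Real.log (N₂ n) := by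
        gcongr
      rwa [Real.log_div hL0.ne' hA4.ne'] at h1
    have hninv : ((n : ℝ))⁻¹ = Real.exp (-(Real.log n)) := by
      rw [Real.exp_neg, Real.exp_log hn0]
    rw [hninv, Real.rpow_def_of_pos hNpos, hφ n, Real.rpow_def_of_pos hL0,
      Real.rpow_def_of_pos hn0, pow_two]
    simp only [← Real.exp_add]
    rw [Real.exp_le_exp]
    have hE : -(Real.log n) + (Real.log (Real.log n) - Real.log (4 * (4 * γ + B))) * (-(2:ℝ)/3)
        + 16 * γ * (Real.log n / (4 * (4 * γ + B))
          + 2 * Real.log (Real.log n) / (3 * (4 * γ + B)))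
        = Real.log (4 * (4 * γ + B)) * (2 / 3)
          + ((Real.log (Real.log n) * ((12 * γ - B) / (3 * (4 * γ + B)))
              + Real.log n * (-B / (2 * (4 * γ + B))))
            + (Real.log (Real.log n) * ((12 * γ - B) / (3 * (4 * γ + B)))
              + Real.log n * (-B / (2 * (4 * γ + B))))) := by
      field_simp
      ring
    rw [← hNeq] at hE
    have hmul : Real.log (N₂ n) * (-(2:ℝ)/3)
        ≤ (Real.log (Real.log n) - Real.log (4 * (4 * γ + B))) * (-(2:ℝ)/3) := by
      linarith
    linarith
  · -- part (ii)
    have hstep : Real.log (Real.log n) * ((12 * γ - B) / (3 * (4 * γ + B)))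
        + Real.log n * (-B / (2 * (4 * γ + B)))
        = Real.log (Real.log n) + (-2 * B * (Real.log n / (4 * (4 * γ + B))
          + 2 * Real.log (Real.log n) / (3 * (4 * γ + B)))) := by
      field_simp
      ring
    have hφeq : φsq n = Real.log n * Real.exp (-2 * B * N₂ n) := by
      rw [hφ n, Real.rpow_def_of_pos hL0, Real.rpow_def_of_pos hn0, ← Real.exp_add, hstep,
        Real.exp_add, Real.exp_log hL0, ← hNeq]
    have h3 : Real.log n / (4 * (4 * γ + B)) + 2 * Real.log n / (3 * (4 * γ + B))
        = 11 * Real.log n / (12 * (4 * γ + B)) := by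
      field_simp
      ring
    have h2 : 2 * Real.log (Real.log n) / (3 * (4 * γ + B))
        ≤ 2 * Real.log n / (3 * (4 * γ + B)) := by
      gcongr
    have hNle : N₂ n ≤ 11 * Real.log n / (12 * (4 * γ + B)) := by
      rw [hNeq]; linarith
    calc N₂ n * Real.exp (-2 * B * N₂ n)
        ≤ 11 * Real.log n / (12 * (4 * γ + B)) * Real.exp (-2 * B * N₂ n) :=
          mul_le_mul_of_nonneg_right hNle (Real.exp_pos _).le
      _ = 11 / (12 * (4 * γ + B)) * (Real.log n * Real.exp (-2 * B * N₂ n)) := by ring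
      _ = 11 / (12 * (4 * γ + B)) * φsq n := by rw [hφeq]
end
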